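/- arXiv:1011.6335 — 2 statements merged into one kernel-verified Lean document; each statement's English description precedes it below -/
import Mathlib

section
/- Let k ⊆ K be an extension of fields of characteristic 0. Let f ∈ K[[t]] be a formal power series with zero constant term, and suppose there exists a nonzero polynomial P ∈ k[t,x] in two variables with coefficients in k such that P(t, f(t)) = 0 in K[[t]]. Then every coefficient of f is algebraic over k. -/
private theorem lift_ringHom_aux {A Ω Ω' : Type*} [CommRing A] [IsDomain A] [Field Ω]
    [Field Ω'] [IsAlgClosed Ω'] [Algebra A Ω] [NoZeroSMulDivisors A Ω]
    [Algebra.IsAlgebraic A Ω] (φ : A →+* Ω') (hφ : Function.Injective φ) :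
    ∃ τ : Ω →+* Ω', ∀ x, τ (algebraMap A Ω x) = φ x := by
  letI : Algebra A Ω' := φ.toAlgebra
  haveI : Module.IsTorsionFree A Ω' := Module.isTorsionFree_iff_algebraMap_injective.mpr hφ
  haveI : Module.IsTorsionFree A Ω := Module.isTorsionFree_iff_algebraMap_injective.mpr
    (fun x y hxy => by
      have h : (x - y) • (1 : Ω) = 0 := by rw [Algebra.smul_def, map_sub, hxy, sub_self, zero_mul]
      rcases smul_eq_zero.mp h with h | h
      · exact sub_eq_zero.mp h
      · exact absurd h one_ne_zero)
  exact ⟨(IsAlgClosed.lift : Ω →ₐ[A] Ω').toRingHom, fun x => AlgHom.commutes _ x⟩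

open MvPolynomial in
/-- Key auxiliary: over an algebraically closed field `Ω ⊇ k`, for any `a` transcendental
over `k` and any `m : k`, there is a ring embedding `Ω → Ω` fixing `k` sending `a` to
`a + m`. -/
theorem exists_ringHom_fixing_moving (k Ω : Type*) [Field k] [Field Ω] [Algebra k Ω]
    [IsAlgClosed Ω] {a : Ω} (ha : Transcendental k a) (m : k) :
    ∃ τ : Ω →+* Ω, (∀ c : k, τ (algebraMap k Ω c) = algebraMap k Ω c) ∧
      τ a = a + algebraMap k Ω m := by
  classical
  have hsing : AlgebraicIndependent k ((↑) : ({a} : Set Ω) → Ω) := by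
    rw [algebraicIndependent_unique_type_iff]
    simpa using ha
  obtain ⟨u, hsu, hmax⟩ := exists_maximal_algebraicIndependent ({a} : Set Ω) Set.univ
    (Set.subset_univ _) hsing
  have htb : IsTranscendenceBasis k ((↑) : u → Ω) := by
    refine ⟨hmax.1.1, fun t ht hst => ?_⟩
    simp only [Subtype.range_coe_subtype, Set.setOf_mem_eq] at *
    exact hmax.eq_of_le ⟨ht, Set.subset_univ _⟩ hst
  have hau : a ∈ u := hsu rfl
  set A := Algebra.adjoin k (Set.range ((↑) : u → Ω)) with hA
  have halgclosure := IsAlgClosed.isAlgClosure_of_transcendence_basis _ htb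
  haveI halg : Algebra.IsAlgebraic A Ω := halgclosure.isAlgebraic
  set E := htb.1.aevalEquiv with hE
  set i₀ : u := ⟨a, hau⟩ with hi₀
  set vm : u → Ω := fun b => if b = i₀ then a + algebraMap k Ω m else (b : Ω) with hvm
  set g : MvPolynomial u k →ₐ[k] MvPolynomial u k :=
    aeval (fun b => if b = i₀ then X b + C m else X b) with hg
  set g' : MvPolynomial u k →ₐ[k] MvPolynomial u k :=
    aeval (fun b => if b = i₀ then X b - C m else X b) with hg'
  have hgg' : g'.comp g = AlgHom.id k _ := by
    apply MvPolynomial.algHom_ext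
    intro b
    by_cases hb : b = i₀ <;> simp [hg, hg', hb]
  have ginj : Function.Injective g := by
    intro p q h
    have := congrArg g' h
    rwa [← AlgHom.comp_apply, ← AlgHom.comp_apply, hgg', AlgHom.id_apply, AlgHom.id_apply] at this
  have h_comp : (aeval vm : MvPolynomial u k →ₐ[k] Ω) = (aeval ((↑) : u → Ω)).comp g := by
    apply MvPolynomial.algHom_ext
    intro b
    by_cases hb : b = i₀ <;> simp [hg, hvm, hb]
    simp [hi₀]
  have hinj_vm : Function.Injective (aeval vm : MvPolynomial u k →ₐ[k] Ω) := by
    rw [h_comp]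
    exact (algebraicIndependent_iff_injective_aeval.mp htb.1).comp ginj
  set φ : A →ₐ[k] Ω := (aeval vm).comp (E.symm : A →ₐ[k] MvPolynomial u k) with hφ
  have hφinj : Function.Injective φ := hinj_vm.comp E.symm.injective
  have h1 : ∀ c : k, algebraMap k Ω c = algebraMap A Ω (algebraMap k A c) := fun c =>
    IsScalarTower.algebraMap_apply k A Ω c
  have hEa : algebraMap A Ω (E (X i₀)) = a := by
    have h := htb.1.algebraMap_aevalEquiv (X i₀)
    rw [MvPolynomial.aeval_X] at h
    exact h
  haveI nz1 : NoZeroSMulDivisors A Ω :=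
    ⟨fun {c x} h => by
      rw [Algebra.smul_def] at h
      rcases mul_eq_zero.mp h with h | h
      · exact Or.inl (Subtype.coe_injective h)
      · exact Or.inr h⟩
  obtain ⟨τalg, hcom⟩ := lift_ringHom_aux (Ω := Ω) φ.toRingHom hφinj
  refine ⟨τalg, ?_, ?_⟩
  · intro c
    show τalg (algebraMap k Ω c) = algebraMap k Ω c
    rw [h1 c, hcom]
    exact φ.commutes c
  · show τalg a = a + algebraMap k Ω m
    conv_lhs => rw [← hEa]
    rw [hcom]
    simp [hφ, hvm]

private lemma powerSeriesMap_injective {R S : Type*} [Semiring R] [Semiring S] (g : R →+* S)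
    (hg : Function.Injective g) : Function.Injective (PowerSeries.map g) := fun p q h =>
  PowerSeries.ext fun d => hg (by rw [← PowerSeries.coeff_map, ← PowerSeries.coeff_map, h])


/-- If `k ⊆ K` is an extension of fields of characteristic `0`, `f ∈ K[[t]]` has zero
constant term, and there is a nonzero polynomial `P ∈ k[t,x]` with `P(t, f(t)) = 0` in
`K[[t]]`, then every coefficient of `f` is algebraic over `k`. -/
theorem coeffs_algebraic_of_poly_relation
    (k K : Type*) [Field k] [Field K] [Algebra k K] [CharZero k] [CharZero K]
    (f : PowerSeries K) (hf : PowerSeries.constantCoeff f = 0)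
    (P : MvPolynomial (Fin 2) k) (hP : P ≠ 0)
    (hPf : MvPolynomial.aeval ![(PowerSeries.X : PowerSeries K), f] P = 0) :
    ∀ n : ℕ, IsAlgebraic k (PowerSeries.coeff n f) := by
  intro n
  by_contra hn
  classical
  set Ω := AlgebraicClosure K with hΩ
  haveI : CharZero Ω := charZero_of_injective_algebraMap (algebraMap K Ω).injective
  set a : Ω := algebraMap K Ω (PowerSeries.coeff n f) with ha
  have hn' : Transcendental k a := by
    intro h
    exact hn ((isAlgebraic_algebraMap_iff (algebraMap K Ω).injective).mp h)
  set β : k →+* LaurentSeries Ω := (HahnSeries.C : Ω →+* LaurentSeries Ω).comp (algebraMap k Ω) with hβ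
  set T : LaurentSeries Ω := HahnSeries.ofPowerSeries ℤ Ω PowerSeries.X with hT
  set ψ : MvPolynomial (Fin 1) k →+* LaurentSeries Ω := MvPolynomial.eval₂Hom β (fun _ => T) with hψ
  set R2 : Polynomial (MvPolynomial (Fin 1) k) :=
    MvPolynomial.finSuccEquiv k 1 (MvPolynomial.rename (Equiv.swap (0 : Fin 2) 1) P) with hR2
  set Q : Polynomial (LaurentSeries Ω) := R2.map ψ with hQdef
  -- ψ is injective
  have hψinj : Function.Injective ψ := by
    set e1 : MvPolynomial (Fin 1) k ≃ₐ[k] Polynomial k :=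
      (MvPolynomial.finSuccEquiv k 0).trans
        (Polynomial.mapAlgEquiv (MvPolynomial.isEmptyAlgEquiv k (Fin 0))) with he1
    set χ : MvPolynomial (Fin 1) k →+* LaurentSeries Ω :=
      ((HahnSeries.ofPowerSeries ℤ Ω).comp ((PowerSeries.map (algebraMap k Ω)).comp
        (Polynomial.coeToPowerSeries.ringHom.comp e1.toAlgHom.toRingHom))) with hχ
    have hψχ : ψ = χ := by
      apply MvPolynomial.ringHom_ext
      · intro c
        simp [hψ, hχ, he1, hβ, MvPolynomial.finSuccEquiv_apply,
          HahnSeries.algebraMap_apply, HahnSeries.C_apply]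
        exact congrArg _ (congrArg _ (MvPolynomial.coeff_zero_C c).symm)
      · intro i
        have : i = 0 := Subsingleton.elim i 0
        subst this
        simp [hψ, hχ, he1, hT, MvPolynomial.finSuccEquiv_apply]
    rw [hψχ, hχ]
    exact (HahnSeries.ofPowerSeries_injective).comp
      ((powerSeriesMap_injective _ (algebraMap k Ω).injective).comp
        ((Polynomial.coe_injective k).comp e1.injective))
  have hQ : Q ≠ 0 := by
    rw [hQdef]
    intro h
    have hR2ne : R2 ≠ 0 := by
      rw [hR2]
      intro h2
      apply hP
      have := (MvPolynomial.finSuccEquiv k 1).injective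
        (h2.trans (map_zero (MvPolynomial.finSuccEquiv k 1)).symm)
      exact (MvPolynomial.rename_injective _ (Equiv.swap (0 : Fin 2) 1).injective)
        (this.trans (map_zero (MvPolynomial.rename (Equiv.swap (0 : Fin 2) 1))).symm)
    exact hR2ne (Polynomial.map_injective ψ hψinj (h.trans (Polynomial.map_zero ψ).symm))
  -- evaluation formula
  have key : ∀ x : LaurentSeries Ω, Polynomial.eval x Q = MvPolynomial.eval₂ β ![T, x] P := by
    intro x
    have hH : ((Polynomial.evalRingHom x).comp ((Polynomial.mapRingHom ψ).comp
        (((MvPolynomial.finSuccEquiv k 1).toAlgHom.toRingHom).comp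
          (MvPolynomial.rename (Equiv.swap (0 : Fin 2) 1)).toRingHom)))
        = MvPolynomial.eval₂Hom β ![T, x] := by
      apply MvPolynomial.ringHom_ext
      · intro c
        simp [MvPolynomial.finSuccEquiv_apply, hψ, hβ]
      · intro i
        have h10 : (MvPolynomial.X (1 : Fin 2) : MvPolynomial (Fin 2) k)
            = MvPolynomial.X (Fin.succ 0) := rfl
        fin_cases i
        · simp [MvPolynomial.rename_X, Equiv.swap_apply_left, h10,
            MvPolynomial.finSuccEquiv_X_succ, hψ]
        · simp [MvPolynomial.rename_X, Equiv.swap_apply_right,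
            MvPolynomial.finSuccEquiv_X_zero]
    exact DFunLike.congr_fun hH P
  -- roots from embeddings
  have hroot : ∀ σ : K →+* Ω, (∀ c, σ (algebraMap k K c) = algebraMap k Ω c) →
      Polynomial.IsRoot Q ((HahnSeries.ofPowerSeries ℤ Ω) (PowerSeries.map σ f)) := by
    intro σ hσ
    set Φ : PowerSeries K →+* LaurentSeries Ω := (HahnSeries.ofPowerSeries ℤ Ω).comp (PowerSeries.map σ)
      with hΦ
    rw [Polynomial.IsRoot]
    have hPf' : MvPolynomial.eval₂ (algebraMap k (PowerSeries K)) ![PowerSeries.X, f] P = 0 := by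
      rw [← MvPolynomial.aeval_def]; exact hPf
    have h2 := MvPolynomial.eval₂_comp_left Φ (algebraMap k (PowerSeries K))
      ![PowerSeries.X, f] P
    rw [hPf', map_zero] at h2
    have hbase : Φ.comp (algebraMap k (PowerSeries K)) = β := by
      refine RingHom.ext fun c => ?_
      have hc := hσ c
      simp [hΦ, hβ, PowerSeries.algebraMap_apply, hc, HahnSeries.ofPowerSeries_C,
        HahnSeries.algebraMap_apply, HahnSeries.C_apply]
    have hfun : (⇑Φ ∘ ![PowerSeries.X, f]) = ![T, Φ f] := by
      funext i
      fin_cases i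
      · simp [hΦ, hT]
      · simp
    rw [hbase, hfun] at h2
    rw [key]
    exact h2.symm
  -- infinitely many embeddings
  have hfam : ∀ m : ℕ, ∃ σ : K →+* Ω, (∀ c, σ (algebraMap k K c) = algebraMap k Ω c) ∧
      σ (PowerSeries.coeff n f) = a + (m : Ω) := by
    intro m
    obtain ⟨τ, hτk, hτa⟩ := exists_ringHom_fixing_moving k Ω hn' ((m : ℕ) : k)
    refine ⟨τ.comp (algebraMap K Ω), fun c => ?_, ?_⟩
    · rw [RingHom.comp_apply, ← IsScalarTower.algebraMap_apply k K Ω]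
      exact hτk c
    · rw [RingHom.comp_apply, ← ha, hτa, map_natCast]
  choose σ hσk hσa using hfam
  set F : ℕ → LaurentSeries Ω := fun m => (HahnSeries.ofPowerSeries ℤ Ω) (PowerSeries.map (σ m) f) with hF
  have hFinj : Function.Injective F := by
    intro m m' h
    have h1 : PowerSeries.map (σ m) f = PowerSeries.map (σ m') f :=
      HahnSeries.ofPowerSeries_injective h
    have hc := congrArg (PowerSeries.coeff n) h1
    rw [PowerSeries.coeff_map, PowerSeries.coeff_map, hσa, hσa] at hc
    exact Nat.cast_injective (add_left_cancel hc)
  exact (Set.infinite_of_injective_forall_mem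
    (s := {x : LaurentSeries Ω | Q.IsRoot x}) hFinj
    (fun m => hroot (σ m) (hσk m))) (Polynomial.finite_setOf_isRoot hQ)
end

section
/- Let G be a finite connected simple graph and let M be a natural number. Then there exist a finite connected simple graph H and a surjective graph homomorphism f : H → G which is a covering map of graphs — that is, for every vertex v of H, f restricts to a bijection from the set of neighbours of v in H onto the set of neighbours of f(v) in G — such that every cycle of H has length at least M (equivalently, the girth of H is at least M). -/
set_option linter.unusedSectionVars false
set_option maxHeartbeats 1000000


lemma exists_perm_extend {α : Type*} [Fintype α] [DecidableEq α] (s : Finset α) (g : α → α)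
    (h : Set.InjOn g s) : ∃ π : Equiv.Perm α, ∀ x ∈ s, π x = g x := by
  classical
  set t := s.image g with ht
  have hcard : t.card = s.card := Finset.card_image_of_injOn h
  have hcc : Fintype.card {x // x ∈ sᶜ} = Fintype.card {x // x ∈ tᶜ} := by
    simp [Finset.card_compl, hcard]
  let e : {x // x ∈ sᶜ} ≃ {x // x ∈ tᶜ} := Fintype.equivOfCardEq hcc
  let F : α → α := fun x => if hx : x ∈ s then g x else (e ⟨x, by simpa using hx⟩ : α)
  have hFs : ∀ x ∈ s, F x = g x := by intro x hx; simp [F, hx]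
  have hFi : Function.Injective F := by
    intro x y hxy
    by_cases hx : x ∈ s <;> by_cases hy : y ∈ s
    · exact h hx hy (by rwa [hFs x hx, hFs y hy] at hxy)
    · exfalso
      have h1 : F x ∈ t := by rw [hFs x hx]; exact Finset.mem_image_of_mem g hx
      have h2 : F y ∈ tᶜ := by
        simp only [F, dif_neg hy]
        exact (e ⟨y, by simpa using hy⟩).2
      rw [hxy] at h1
      simp only [Finset.mem_compl] at h2
      exact h2 h1
    · exfalso
      have h1 : F y ∈ t := by rw [hFs y hy]; exact Finset.mem_image_of_mem g hy
      have h2 : F x ∈ tᶜ := by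
        simp only [F, dif_neg hx]
        exact (e ⟨x, by simpa using hx⟩).2
      rw [← hxy] at h1
      simp only [Finset.mem_compl] at h2
      exact h2 h1
    · have : e ⟨x, by simpa using hx⟩ = e ⟨y, by simpa using hy⟩ := by
        apply Subtype.ext
        simpa [F, dif_neg hx, dif_neg hy] using hxy
      exact congrArg Subtype.val (e.injective this)
  have hFb : Function.Bijective F := (Finite.injective_iff_bijective).mp hFi
  exact ⟨Equiv.ofBijective F hFb, fun x hx => hFs x hx⟩

namespace GirthCoverAux

variable {V : Type} [LinearOrder V]

/-- padded access -/
def pad (M : ℕ) (w : Fin (M+1) → V) (n : ℕ) : V := w ⟨min n M, by omega⟩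

def domA (M : ℕ) (w : Fin (M+1) → V) (u v : V) (j : ℕ) : Prop :=
  j ≠ 0 ∧ j ≤ M ∧ pad M w (j-1) = u ∧ pad M w j = v

def domB (M : ℕ) (w : Fin (M+1) → V) (u v : V) (j : ℕ) : Prop :=
  j < M ∧ pad M w j = v ∧ pad M w (j+1) = u

instance (M : ℕ) (w : Fin (M+1) → V) (u v : V) (j : ℕ) : Decidable (domA M w u v j) := by
  unfold domA; infer_instance

instance (M : ℕ) (w : Fin (M+1) → V) (u v : V) (j : ℕ) : Decidable (domB M w u v j) := by
  unfold domB; infer_instance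

def gfun (M : ℕ) (w : Fin (M+1) → V) (u v : V) (j : Fin (M+1)) : Fin (M+1) :=
  if domA M w u v j.val then ⟨j.val - 1, by omega⟩
  else if h : domB M w u v j.val then ⟨j.val + 1, by have := h.1; omega⟩
  else j

def dom (M : ℕ) (w : Fin (M+1) → V) (u v : V) : Finset (Fin (M+1)) :=
  Finset.univ.filter (fun j => domA M w u v j.val ∨ domB M w u v j.val)

def Good (M : ℕ) (w : Fin (M+1) → V) : Prop :=
  ∀ j : ℕ, j + 2 ≤ M → pad M w j ≠ pad M w (j+1) → pad M w (j+1) ≠ pad M w (j+2) →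
    pad M w (j+2) ≠ pad M w j

lemma not_domA_of_domB {M : ℕ} {w : Fin (M+1) → V} {u v : V} (hw : Good M w) (huv : u ≠ v)
    {j : ℕ} (hB : domB M w u v j) : ¬ domA M w u v j := by
  rintro ⟨hj0, hjM, hA1, hA2⟩
  have hBM := hB.1
  have h1 : j - 1 + 1 = j := by omega
  have h2 : j - 1 + 2 = j + 1 := by omega
  have := hw (j-1) (by omega) (by rw [h1, hA1, hA2]; exact huv)
      (by rw [h1, h2, hA2, hB.2.2]; exact fun e => huv e.symm)
  rw [h2, hB.2.2, hA1] at this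
  exact this rfl

lemma gfun_val_domA {M : ℕ} {w : Fin (M+1) → V} {u v : V} {j : Fin (M+1)}
    (hA : domA M w u v j.val) : (gfun M w u v j).val = j.val - 1 := by
  simp [gfun, if_pos hA]

lemma gfun_val_domB {M : ℕ} {w : Fin (M+1) → V} {u v : V} (hw : Good M w) (huv : u ≠ v)
    {j : Fin (M+1)} (hB : domB M w u v j.val) : (gfun M w u v j).val = j.val + 1 := by
  rw [gfun, if_neg (not_domA_of_domB hw huv hB), dif_pos hB]

lemma injOn_gfun {M : ℕ} {w : Fin (M+1) → V} {u v : V} (hw : Good M w) (huv : u ≠ v) :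
    Set.InjOn (gfun M w u v) (dom M w u v) := by
  intro x hx y hy hxy
  simp only [dom, Finset.coe_filter, Set.mem_setOf_eq] at hx hy
  have hxy' : (gfun M w u v x).val = (gfun M w u v y).val := by rw [hxy]
  have main : ∀ a b : Fin (M+1), domA M w u v a.val → domB M w u v b.val →
      (gfun M w u v a).val = (gfun M w u v b).val → False := by
    intro a b hA hB heq
    rw [gfun_val_domA hA, gfun_val_domB hw huv hB] at heq
    have hab : a.val = b.val + 2 := by have := hA.1; omega
    have e1 : pad M w (b.val + 1) = u := by have := hA.2.2.1; rwa [hab] at this; 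
    have e2 : pad M w (b.val + 2) = v := by have := hA.2.2.2; rwa [hab] at this
    have := hw b.val (by have := hA.2.1; omega)
        (by rw [hB.2.1, e1]; exact fun e => huv e.symm)
        (by rw [e1, e2]; exact huv)
    rw [e2, hB.2.1] at this
    exact this rfl
  rcases hx.2 with hxA | hxB <;> rcases hy.2 with hyA | hyB
  · rw [gfun_val_domA hxA, gfun_val_domA hyA] at hxy'
    exact Fin.ext (by have := hxA.1; have := hyA.1; omega)
  · exact absurd hxy' (fun h => main x y hxA hyB h)
  · exact absurd hxy'.symm (fun h => main y x hyA hxB h)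
  · rw [gfun_val_domB hw huv hxB, gfun_val_domB hw huv hyB] at hxy'
    exact Fin.ext (by omega)

noncomputable def volt (M : ℕ) (w : Fin (M+1) → V) (u v : V) : Equiv.Perm (Fin (M+1)) :=
  if h : ∃ π : Equiv.Perm (Fin (M+1)), ∀ j ∈ dom M w u v, π j = gfun M w u v j then h.choose
  else 1

lemma volt_spec {M : ℕ} {w : Fin (M+1) → V} {u v : V} (hw : Good M w) (huv : u ≠ v)
    {j : Fin (M+1)} (hj : j ∈ dom M w u v) : volt M w u v j = gfun M w u v j := by
  have h : ∃ π : Equiv.Perm (Fin (M+1)), ∀ j ∈ dom M w u v, π j = gfun M w u v j :=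
    exists_perm_extend _ _ (injOn_gfun hw huv)
  rw [volt, dif_pos h]
  exact h.choose_spec j hj

noncomputable def sigma (M : ℕ) (u v : V) : (Fin (M+1) → V) → Equiv.Perm (Fin (M+1)) :=
  fun w => if u < v then volt M w u v else (volt M w v u)⁻¹

lemma sigma_symm {M : ℕ} {u v : V} (h : u ≠ v) : sigma M v u = (sigma M u v)⁻¹ := by
  funext w
  rcases h.lt_or_gt with hlt | hlt
  · have : ¬ v < u := not_lt.2 hlt.le
    simp [sigma, hlt, this]
  · have : ¬ u < v := not_lt.2 hlt.le
    simp [sigma, hlt, this]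



lemma prod_ne_one {M L : ℕ} (hL1 : 1 ≤ L) (hLM : L < M) (u : ℕ → V)
    (h1 : ∀ i, i < L → u i ≠ u (i+1)) (h2 : ∀ i, i + 2 ≤ L → u (i+2) ≠ u i) :
    ((List.range L).map (fun i => sigma M (u i) (u (i+1)))).prod ≠ 1 := by
  set w : Fin (M+1) → V := fun k => u (min k.val L) with hw
  have hpad : ∀ n : ℕ, pad M w n = u (min n L) := by
    intro n
    show u (min (min n M) L) = u (min n L)
    congr 1
    omega
  have hGood : Good M w := by
    intro j hjM hd1 hd2
    rw [hpad, hpad] at *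
    by_cases hjL : j + 2 ≤ L
    · have e0 : min j L = j := by omega
      have e2 : min (j+2) L = j + 2 := by omega
      rw [e0, e2]
      exact h2 j hjL
    · exfalso
      apply hd2
      congr 1
      omega
  -- the key step
  have hstep : ∀ j, (hj : j < L) →
      sigma M (u j) (u (j+1)) w ⟨j+1, by omega⟩ = ⟨j, by omega⟩ := by
    intro j hj
    have hne := h1 j hj
    have hpj : pad M w j = u j := by rw [hpad]; congr 1; omega
    have hpj1 : pad M w (j+1) = u (j+1) := by rw [hpad]; congr 1; omega
    rcases hne.lt_or_gt with hlt | hlt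
    · -- u j < u (j+1) : sigma = volt M w (u j) (u (j+1))
      have hA : domA M w (u j) (u (j+1)) ((⟨j+1, by omega⟩ : Fin (M+1)).val) := by
        refine ⟨by simp, by simp; omega, ?_, ?_⟩
        · simpa using hpj
        · simpa using hpj1
      have hmem : (⟨j+1, by omega⟩ : Fin (M+1)) ∈ dom M w (u j) (u (j+1)) := by
        simp [dom]; exact Or.inl hA
      rw [sigma, if_pos hlt, volt_spec hGood hne hmem]
      apply Fin.ext
      rw [gfun_val_domA hA]
      simp
    · -- u (j+1) < u j : sigma = (volt M w (u (j+1)) (u j))⁻¹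
      have hne' : u (j+1) ≠ u j := fun e => hne e.symm
      have hB : domB M w (u (j+1)) (u j) ((⟨j, by omega⟩ : Fin (M+1)).val) := by
        refine ⟨by simpa using (by omega : j < M), ?_, ?_⟩
        · simpa using hpj
        · simpa using hpj1
      have hmem : (⟨j, by omega⟩ : Fin (M+1)) ∈ dom M w (u (j+1)) (u j) := by
        simp [dom]; exact Or.inr hB
      rw [sigma, if_neg (not_lt.2 hlt.le)]
      have : volt M w (u (j+1)) (u j) ⟨j, by omega⟩ = ⟨j+1, by omega⟩ := by
        rw [volt_spec hGood hne' hmem]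
        apply Fin.ext
        rw [gfun_val_domB hGood hne' hB]
      rw [← this]; exact Equiv.symm_apply_apply _ _
  -- iterate
  have hiter : ∀ j, (hj : j ≤ L) →
      (((List.range j).map (fun i => sigma M (u i) (u (i+1)))).prod w) ⟨j, by omega⟩
        = ⟨0, by omega⟩ := by
    intro j
    induction j with
    | zero => intro _; simp
    | succ n ih =>
      intro hn
      rw [List.range_succ, List.map_append, List.prod_append]
      simp only [List.map_cons, List.map_nil, List.prod_cons, List.prod_nil, mul_one]
      have : ((((List.range n).map (fun i => sigma M (u i) (u (i+1)))).prod *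
          sigma M (u n) (u (n+1))) w) ⟨n+1, by omega⟩
          = (((List.range n).map (fun i => sigma M (u i) (u (i+1)))).prod w)
            (sigma M (u n) (u (n+1)) w ⟨n+1, by omega⟩) := rfl
      rw [this, hstep n (by omega), ih (by omega)]
  intro hcontr
  have := hiter L le_rfl
  rw [hcontr] at this
  have : (L : ℕ) = 0 := by
    have h' := congrArg Fin.val this
    simpa using h'
  omega

end GirthCoverAux

lemma walk_edges_get {V : Type*} {G : SimpleGraph V} {a b : V} (p : G.Walk a b) :
    ∀ (i : ℕ) (h : i < p.length),
      p.edges.get ⟨i, by rwa [SimpleGraph.Walk.length_edges]⟩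
        = s(p.getVert i, p.getVert (i+1)) := by
  induction p with
  | nil => intro i h; simp at h
  | cons hadj q ih =>
    intro i h
    match i with
    | 0 =>
      have h1 : (SimpleGraph.Walk.cons hadj q).getVert 1 = q.getVert 0 :=
        SimpleGraph.Walk.getVert_cons_succ q hadj
      rw [SimpleGraph.Walk.getVert_zero] at h1
      simp only [SimpleGraph.Walk.edges_cons, List.get]
      rw [SimpleGraph.Walk.getVert_zero, h1]
    | (n+1) =>
      have hn : n < q.length := by
        simp only [SimpleGraph.Walk.length_cons] at h; omega
      have := ih n hn
      simp only [SimpleGraph.Walk.edges_cons, List.get]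
      rw [SimpleGraph.Walk.getVert_cons_succ, SimpleGraph.Walk.getVert_cons_succ]
      exact this

/-- For every finite connected simple graph `G` and every `M : ℕ` there is a finite
connected simple graph `H` together with a surjective covering map of graphs
`f : H → G` (a graph homomorphism restricting to a bijection between the neighbour
set of each vertex `v` of `H` and the neighbour set of `f v` in `G`) such that every
cycle of `H` has length at least `M`. -/
theorem exists_finite_cover_with_large_girth
    {V : Type} [Fintype V] (G : SimpleGraph V) (hG : G.Connected) (M : ℕ) :
    ∃ (W : Type) (_ : Fintype W) (H : SimpleGraph W) (f : H →g G),
      H.Connected ∧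
      Function.Surjective f ∧
      (∀ w : W, Set.BijOn f (H.neighborSet w) (G.neighborSet (f w))) ∧
      (∀ (w : W) (c : H.Walk w w), c.IsCycle → M ≤ c.length) := by
  classical
  obtain ⟨v₀⟩ := hG.nonempty
  letI : LinearOrder V := LinearOrder.lift' (Fintype.equivFin V) (Equiv.injective _)
  set A := ((Fin (M+1) → V) → Equiv.Perm (Fin (M+1))) with hA
  let σ : V → V → A := fun u v => GirthCoverAux.sigma M u v
  have hσsymm : ∀ {u v : V}, u ≠ v → σ v u = (σ u v)⁻¹ := fun h =>
    GirthCoverAux.sigma_symm h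
  let Hbig : SimpleGraph (V × A) :=
    { Adj := fun p q => G.Adj p.1 q.1 ∧ q.2 = p.2 * σ p.1 q.1
      symm := by
        constructor
        rintro ⟨a, x⟩ ⟨b, y⟩ ⟨hab, hxy⟩
        refine ⟨hab.symm, ?_⟩
        rw [hxy, hσsymm hab.ne, mul_inv_cancel_right]
      loopless := ⟨fun p h => G.loopless.irrefl p.1 h.1⟩ }
  let S : Set (V × A) := {p | Hbig.Reachable (v₀, 1) p}
  haveI : Fintype ↥S := Fintype.ofFinite _
  let H : SimpleGraph ↥S := Hbig.induce S
  have hAdj : ∀ {a b : ↥S}, H.Adj a b ↔ Hbig.Adj (a : V × A) (b : V × A) := Iff.rfl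
  have hS_adj : ∀ (p q : V × A), p ∈ S → Hbig.Adj p q → q ∈ S := by
    intro p q hp h
    exact hp.trans h.reachable
  let f : H →g G := ⟨fun p => (p : V × A).1, fun h => h.1⟩
  -- lifting reachability into the induced graph
  have lift : ∀ (p q : V × A) (wlk : Hbig.Walk p q) (hp : p ∈ S),
      ∃ hq : q ∈ S, H.Reachable ⟨p, hp⟩ ⟨q, hq⟩ := by
    intro p q wlk
    induction wlk with
    | nil => intro hp; exact ⟨hp, SimpleGraph.Reachable.refl _⟩
    | @cons a c q' h w ih =>
      intro hp
      have hc : c ∈ S := hS_adj _ _ hp h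
      obtain ⟨hq, hre⟩ := ih hc
      exact ⟨hq, SimpleGraph.Reachable.trans
        (SimpleGraph.Adj.reachable (show H.Adj ⟨a, hp⟩ ⟨c, hc⟩ from h)) hre⟩
  have hbase : (v₀, (1 : A)) ∈ S := SimpleGraph.Reachable.refl _
  have hconn : H.Connected := by
    have hpre : ∀ q : ↥S, H.Reachable ⟨(v₀, 1), hbase⟩ q := by
      rintro ⟨q, hq⟩
      obtain ⟨wlk⟩ := hq
      obtain ⟨hq', hre⟩ := lift _ _ wlk hbase
      exact hre
    haveI : Nonempty ↥S := ⟨⟨(v₀, 1), hbase⟩⟩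
    exact ⟨fun a b => (hpre a).symm.trans (hpre b)⟩
  have hsurj : Function.Surjective f := by
    have key : ∀ (a b : V) (_ : G.Walk a b) (x : A), (a, x) ∈ S → ∃ y : A, (b, y) ∈ S := by
      intro a b wlk
      induction wlk with
      | nil => intro x hx; exact ⟨x, hx⟩
      | @cons a c b h w ih =>
        intro x hx
        have : (c, x * σ a c) ∈ S := hS_adj _ _ hx ⟨h, rfl⟩
        exact ih _ this
    intro v
    obtain ⟨wlk⟩ := hG.preconnected v₀ v
    obtain ⟨y, hy⟩ := key v₀ v wlk 1 hbase
    exact ⟨⟨(v, y), hy⟩, rfl⟩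
  have hbij : ∀ w : ↥S, Set.BijOn f (H.neighborSet w) (G.neighborSet (f w)) := by
    rintro ⟨⟨v, x⟩, hv⟩
    refine ⟨?_, ?_, ?_⟩
    · rintro ⟨⟨u, y⟩, hu⟩ h
      exact h.1
    · rintro ⟨⟨u₁, y₁⟩, hu₁⟩ h₁ ⟨⟨u₂, y₂⟩, hu₂⟩ h₂ heq
      have e1 : y₁ = x * σ v u₁ := h₁.2
      have e2 : y₂ = x * σ v u₂ := h₂.2
      have hu : u₁ = u₂ := heq
      subst hu
      apply Subtype.ext
      show (u₁, y₁) = (u₁, y₂)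
      rw [e1, e2]
    · intro u hu
      have hu' : G.Adj v u := hu
      have hp : (u, x * σ v u) ∈ S := hS_adj _ _ hv ⟨hu', rfl⟩
      exact ⟨⟨(u, x * σ v u), hp⟩, show Hbig.Adj (v, x) (u, x * σ v u) from ⟨hu', rfl⟩, rfl⟩
  refine ⟨↥S, inferInstance, H, f, hconn, hsurj, hbij, ?_⟩
  intro w c hc
  by_contra hlt
  push_neg at hlt
  set L := c.length with hL
  have hL3 : 3 ≤ L := hc.three_le_length
  set u : ℕ → V := fun i => ((c.getVert i : ↥S) : V × A).1 with hu
  set x : ℕ → A := fun i => ((c.getVert i : ↥S) : V × A).2 with hx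
  have hadj : ∀ i, i < L → Hbig.Adj (c.getVert i : V × A) (c.getVert (i+1) : V × A) := by
    intro i hi
    exact c.adj_getVert_succ hi
  have h1 : ∀ i, i < L → u i ≠ u (i+1) := fun i hi => (hadj i hi).1.ne
  have hrec : ∀ i, i < L → x (i+1) = x i * σ (u i) (u (i+1)) := fun i hi => (hadj i hi).2
  have h2 : ∀ i, i + 2 ≤ L → u (i+2) ≠ u i := by
    intro i hi heq
    have e1 := hrec i (by omega)
    have e2 := hrec (i+1) (by omega)
    have hxx : x (i+2) = x i := by
      rw [e2, e1]
      have : σ (u (i+1)) (u (i+2)) = (σ (u i) (u (i+1)))⁻¹ := by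
        rw [show u (i+2) = u i from heq]
        exact hσsymm (h1 i (by omega))
      rw [this, mul_inv_cancel_right]
    have hvert : c.getVert (i+2) = c.getVert i :=
      Subtype.ext (Prod.ext_iff.mpr ⟨heq, hxx⟩)
    have hget1 := walk_edges_get c (i+1) (by omega)
    have hget0 := walk_edges_get c i (by omega)
    have hedge : c.edges.get ⟨i+1, by rw [SimpleGraph.Walk.length_edges]; omega⟩
        = c.edges.get ⟨i, by rw [SimpleGraph.Walk.length_edges]; omega⟩ := by
      rw [hget1, hget0, hvert]
      exact Sym2.eq_swap
    have hnodup := hc.isCircuit.isTrail.edges_nodup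
    have := (List.nodup_iff_injective_get.mp hnodup) hedge
    have : i + 1 = i := congrArg Fin.val this
    omega
  have hprod : ∀ j, (hj : j ≤ L) →
      x j = x 0 * ((List.range j).map (fun i => σ (u i) (u (i+1)))).prod := by
    intro j
    induction j with
    | zero => intro _; simp
    | succ n ih =>
      intro hn
      rw [List.range_succ, List.map_append, List.prod_append]
      simp only [List.map_cons, List.map_nil, List.prod_cons, List.prod_nil, mul_one]
      rw [← mul_assoc, ← ih (by omega)]
      exact hrec n (by omega)
  have hclosed : x L = x 0 := by
    show ((c.getVert c.length : ↥S) : V × A).2 = ((c.getVert 0 : ↥S) : V × A).2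
    rw [SimpleGraph.Walk.getVert_length, SimpleGraph.Walk.getVert_zero]
  have hone : ((List.range L).map (fun i => σ (u i) (u (i+1)))).prod = 1 := by
    have := hprod L le_rfl
    rw [hclosed] at this
    exact left_eq_mul.mp this
  exact GirthCoverAux.prod_ne_one (by omega) hlt u h1 h2 hone
end
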